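/- Let L(ρ) = −i[H,ρ] + Σ_μ D_{L_μ}(ρ) be a Lindblad generator on n×n complex matrices and let ρ̄ be a density matrix with L(ρ̄) = 0. Let A_1,…,A_m and F_1,…,F_m be n×n matrices such that tr(F_k ρ̄) = 0 and −L(F_k ρ̄) = A_k ρ̄ − tr(A_k ρ̄) ρ̄ for each k. Then the m×m matrix X with entries X_{k,j} = tr( F_j ρ̄ A_k† + A_j ρ̄ F_k† ) is Hermitian and positive semidefinite. In particular, for a single pair (A, F) with tr(Fρ̄) = 0 and −L(Fρ̄) = Aρ̄ − tr(Aρ̄)ρ̄, one has tr( F ρ̄ A† + A ρ̄ F† ) ≥ 0. -/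

import Mathlib

open scoped Matrix ComplexOrder

/-- The dissipator `D_X(ρ) = XρX† − (1/2)(X†Xρ + ρX†X)`. -/
noncomputable def dissipator {n : ℕ} (X ρ : Matrix (Fin n) (Fin n) ℂ) :
    Matrix (Fin n) (Fin n) ℂ :=
  X * ρ * Xᴴ - (1 / 2 : ℂ) • (Xᴴ * X * ρ + ρ * (Xᴴ * X))

/-- The Heisenberg-picture adjoint of the Lindblad generator. -/
noncomputable def Ladj {n p : ℕ} (H : Matrix (Fin n) (Fin n) ℂ)
    (Lop : Fin p → Matrix (Fin n) (Fin n) ℂ) (X : Matrix (Fin n) (Fin n) ℂ) :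
    Matrix (Fin n) (Fin n) ℂ :=
  Complex.I • (H * X - X * H) +
    ∑ μ, ((Lop μ)ᴴ * X * Lop μ -
      (1/2 : ℂ) • ((Lop μ)ᴴ * Lop μ * X + X * ((Lop μ)ᴴ * Lop μ)))

lemma ham_dual {n : ℕ} (H X M : Matrix (Fin n) (Fin n) ℂ) :
    ((Complex.I • (H * X - X * H)) * M).trace
      = (X * ((-Complex.I) • (H * M - M * H))).trace := by
  have h1 : (H * X * M).trace = (X * M * H).trace := by
    rw [mul_assoc, Matrix.trace_mul_comm]
  simp only [Matrix.smul_mul, Matrix.mul_smul, Matrix.sub_mul, Matrix.mul_sub,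
    Matrix.trace_smul, Matrix.trace_sub, smul_eq_mul, mul_assoc] at *
  ring_nf
  linear_combination Complex.I * h1

lemma diss_dual {n : ℕ} (L X M : Matrix (Fin n) (Fin n) ℂ) :
    ((Lᴴ * X * L - (1/2 : ℂ) • (Lᴴ * L * X + X * (Lᴴ * L))) * M).trace
      = (X * dissipator L M).trace := by
  have h1 : (Lᴴ * (X * L * M)).trace = (X * L * M * Lᴴ).trace := by
    rw [Matrix.trace_mul_comm]
  have h2 : (Lᴴ * L * (X * M)).trace = (X * M * (Lᴴ * L)).trace := by
    rw [Matrix.trace_mul_comm]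
  simp only [dissipator, Matrix.sub_mul, Matrix.mul_sub, Matrix.add_mul, Matrix.mul_add,
    Matrix.smul_mul, Matrix.mul_smul, Matrix.trace_sub, Matrix.trace_add,
    Matrix.trace_smul, smul_eq_mul, mul_assoc] at *
  ring_nf
  linear_combination h1 - (1/2 : ℂ) * h2

lemma Ladj_dual {n p : ℕ} (H : Matrix (Fin n) (Fin n) ℂ)
    (Lop : Fin p → Matrix (Fin n) (Fin n) ℂ) (X M : Matrix (Fin n) (Fin n) ℂ) :
    (Ladj H Lop X * M).trace
      = (X * ((-Complex.I) • (H * M - M * H) + ∑ μ, dissipator (Lop μ) M)).trace := by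
  simp only [Ladj, Matrix.add_mul, Matrix.mul_add, Matrix.trace_add,
    Finset.sum_mul, Matrix.mul_sum, Matrix.trace_sum]
  rw [ham_dual]
  congr 1
  exact Finset.sum_congr rfl fun μ _ => diss_dual (Lop μ) X M

lemma Ladj_mul {n p : ℕ} (H : Matrix (Fin n) (Fin n) ℂ)
    (Lop : Fin p → Matrix (Fin n) (Fin n) ℂ) (W Y : Matrix (Fin n) (Fin n) ℂ) :
    Ladj H Lop (W * Y)
      = Ladj H Lop W * Y + W * Ladj H Lop Y
        + ∑ μ, ((Lop μ)ᴴ * W - W * (Lop μ)ᴴ) * (Y * Lop μ - Lop μ * Y) := by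
  simp only [Ladj, Matrix.add_mul, Matrix.mul_add, Finset.sum_mul, Matrix.mul_sum]
  have hμ : ∀ μ : Fin p,
      (Lop μ)ᴴ * (W * Y) * Lop μ -
        (1/2 : ℂ) • ((Lop μ)ᴴ * Lop μ * (W * Y) + W * Y * ((Lop μ)ᴴ * Lop μ))
      = ((Lop μ)ᴴ * W * Lop μ -
          (1/2 : ℂ) • ((Lop μ)ᴴ * Lop μ * W + W * ((Lop μ)ᴴ * Lop μ))) * Y
        + W * ((Lop μ)ᴴ * Y * Lop μ -
          (1/2 : ℂ) • ((Lop μ)ᴴ * Lop μ * Y + Y * ((Lop μ)ᴴ * Lop μ)))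
        + ((Lop μ)ᴴ * W - W * (Lop μ)ᴴ) * (Y * Lop μ - Lop μ * Y) := by
    intro μ
    simp only [Matrix.sub_mul, Matrix.mul_sub, Matrix.add_mul, Matrix.mul_add,
      smul_add, Matrix.smul_mul, Matrix.mul_smul, mul_assoc]
    module
  rw [Finset.sum_congr rfl fun μ _ => hμ μ]
  simp only [Finset.sum_add_distrib]
  have hham : Complex.I • (H * (W * Y) - W * Y * H)
      = Complex.I • (H * W - W * H) * Y + W * Complex.I • (H * Y - Y * H) := by
    simp only [Matrix.sub_mul, Matrix.mul_sub, Matrix.smul_mul, Matrix.mul_smul,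
      smul_sub, mul_assoc]
    module
  rw [hham]
  abel

lemma Lform_conjT {n p : ℕ}
    (H : Matrix (Fin n) (Fin n) ℂ) (hH : H.IsHermitian)
    (Lop : Fin p → Matrix (Fin n) (Fin n) ℂ)
    (M : Matrix (Fin n) (Fin n) ℂ) :
    ((-Complex.I) • (H * M - M * H) + ∑ μ, dissipator (Lop μ) M)ᴴ
     = (-Complex.I) • (H * Mᴴ - Mᴴ * H) + ∑ μ, dissipator (Lop μ) Mᴴ := by
  have hhalf : (starRingEnd ℂ) (1/2) = (1/2 : ℂ) := by
    rw [show (1/2:ℂ) = ((1/2:ℝ):ℂ) by norm_num, Complex.conj_ofReal]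
  simp only [Matrix.conjTranspose_add, Matrix.conjTranspose_smul,
    Matrix.conjTranspose_sub, Matrix.conjTranspose_mul, Matrix.conjTranspose_sum,
    dissipator, Matrix.conjTranspose_conjTranspose, hH.eq, star_neg, Complex.star_def,
    Complex.conj_I, hhalf, neg_neg]
  congr 1
  · rw [smul_sub, smul_sub]; module
  · refine Finset.sum_congr rfl fun μ _ => ?_
    simp only [smul_add, mul_assoc]
    module

lemma key_identity {n p : ℕ}
    (L : Matrix (Fin n) (Fin n) ℂ → Matrix (Fin n) (Fin n) ℂ)
    (H : Matrix (Fin n) (Fin n) ℂ) (hH : H.IsHermitian)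
    (Lop : Fin p → Matrix (Fin n) (Fin n) ℂ)
    (hL : ∀ ρ, L ρ = (-Complex.I) • (H * ρ - ρ * H) + ∑ μ, dissipator (Lop μ) ρ)
    (ρ : Matrix (Fin n) (Fin n) ℂ) (hρ : ρᴴ = ρ) (hstat : L ρ = 0)
    (B C : Matrix (Fin n) (Fin n) ℂ) :
    (Bᴴ * L (C * ρ)).trace + ((L (B * ρ))ᴴ * C).trace
      = -∑ μ, ((Lop μ * B - B * Lop μ)ᴴ * (Lop μ * C - C * Lop μ) * ρ).trace := by
  have hd : ∀ X M : Matrix (Fin n) (Fin n) ℂ,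
      (Ladj H Lop X * M).trace = (X * L M).trace := by
    intro X M; rw [hL M]; exact Ladj_dual H Lop X M
  have hc : (L (B * ρ))ᴴ = L (ρ * Bᴴ) := by
    rw [hL (B * ρ), hL (ρ * Bᴴ), Lform_conjT H hH Lop, Matrix.conjTranspose_mul, hρ]
  have step1 : (Bᴴ * L (C * ρ)).trace = (Ladj H Lop Bᴴ * C * ρ).trace := by
    rw [mul_assoc, hd Bᴴ (C * ρ)]
  have step2 : ((L (B * ρ))ᴴ * C).trace = (Bᴴ * Ladj H Lop C * ρ).trace := by
    rw [hc, Matrix.trace_mul_comm, ← hd C (ρ * Bᴴ), ← mul_assoc,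
      Matrix.trace_mul_comm, ← mul_assoc]
  rw [step1, step2, ← Matrix.trace_add, ← Matrix.add_mul]
  have hsplit : Ladj H Lop Bᴴ * C + Bᴴ * Ladj H Lop C
      = Ladj H Lop (Bᴴ * C)
        - ∑ μ, (Lop μ * B - B * Lop μ)ᴴ * (Lop μ * C - C * Lop μ) := by
    rw [Ladj_mul H Lop Bᴴ C]
    have : ∀ μ : Fin p,
        ((Lop μ)ᴴ * Bᴴ - Bᴴ * (Lop μ)ᴴ) * (C * Lop μ - Lop μ * C)
        = (Lop μ * B - B * Lop μ)ᴴ * (Lop μ * C - C * Lop μ) := by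
      intro μ
      simp only [Matrix.conjTranspose_sub, Matrix.conjTranspose_mul]
      noncomm_ring
    rw [Finset.sum_congr rfl fun μ _ => this μ]
    abel
  rw [hsplit, Matrix.sub_mul, Matrix.trace_sub, hd (Bᴴ * C) ρ, hstat, mul_zero,
    Matrix.trace_zero, zero_sub, Finset.sum_mul, Matrix.trace_sum]

lemma trace_conjT_mul_self_nonneg {n : ℕ} (M : Matrix (Fin n) (Fin n) ℂ) :
    0 ≤ (Mᴴ * M).trace := by
  rw [Matrix.trace]
  refine Finset.sum_nonneg fun i _ => ?_
  rw [Matrix.diag_apply, Matrix.mul_apply]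
  refine Finset.sum_nonneg fun j _ => ?_
  simpa using star_mul_self_nonneg (M j i)

lemma trace_sandwich_nonneg {n : ℕ} {ρ : Matrix (Fin n) (Fin n) ℂ}
    (hpsd : ρ.PosSemidef) (N : Matrix (Fin n) (Fin n) ℂ) :
    0 ≤ (Nᴴ * N * ρ).trace := by
  obtain ⟨s, hsh, hss⟩ : ∃ s : Matrix (Fin n) (Fin n) ℂ, sᴴ = s ∧ s * s = ρ :=
    by
      classical
      open MatrixOrder in
      obtain ⟨X, hX, -, hXX⟩ :=
        sub_zero ρ ▸ CFC.exists_sqrt_of_isSelfAdjoint_of_quasispectrumRestricts hpsd.isHermitian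
          (QuasispectrumRestricts.nnreal_of_nonneg hpsd.nonneg)
      exact ⟨X, hX.star_eq, by rw [hXX, sub_zero]⟩
  have h0 : Nᴴ * N * (s * s) = (Nᴴ * N * s) * s := by noncomm_ring
  have : (Nᴴ * N * ρ).trace = ((N * s)ᴴ * (N * s)).trace := by
    rw [← hss, h0, Matrix.trace_mul_comm]
    congr 1
    rw [Matrix.conjTranspose_mul, hsh]
    noncomm_ring
  rw [this]
  exact trace_conjT_mul_self_nonneg (N * s)

/-- The cross-term formula: with stationarity, the matrix entries become a sum of
`tr([L,F₁]† [L,F₂] ρ)`. -/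
lemma entry_eq {n p : ℕ}
    (L : Matrix (Fin n) (Fin n) ℂ → Matrix (Fin n) (Fin n) ℂ)
    (H : Matrix (Fin n) (Fin n) ℂ) (hH : H.IsHermitian)
    (Lop : Fin p → Matrix (Fin n) (Fin n) ℂ)
    (hL : ∀ ρ, L ρ = (-Complex.I) • (H * ρ - ρ * H) + ∑ μ, dissipator (Lop μ) ρ)
    (ρ : Matrix (Fin n) (Fin n) ℂ) (hρ : ρᴴ = ρ) (hstat : L ρ = 0)
    (A₁ F₁ A₂ F₂ : Matrix (Fin n) (Fin n) ℂ)
    (htr1 : (F₁ * ρ).trace = 0) (htr2 : (F₂ * ρ).trace = 0)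
    (heq1 : -(L (F₁ * ρ)) = A₁ * ρ - (A₁ * ρ).trace • ρ)
    (heq2 : -(L (F₂ * ρ)) = A₂ * ρ - (A₂ * ρ).trace • ρ) :
    (F₂ * ρ * A₁ᴴ + A₂ * ρ * F₁ᴴ).trace
      = ∑ μ, ((Lop μ * F₁ - F₁ * Lop μ)ᴴ * (Lop μ * F₂ - F₂ * Lop μ) * ρ).trace := by
  have hA1 : A₁ * ρ = -(L (F₁ * ρ)) + (A₁ * ρ).trace • ρ := by rw [heq1]; abel
  have hA2 : A₂ * ρ = -(L (F₂ * ρ)) + (A₂ * ρ).trace • ρ := by rw [heq2]; abel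
  have t1 : (F₂ * ρ * A₁ᴴ).trace = -((L (F₁ * ρ))ᴴ * F₂).trace := by
    rw [mul_assoc, show ρ * A₁ᴴ = (A₁ * ρ)ᴴ by rw [Matrix.conjTranspose_mul, hρ], hA1]
    simp only [Matrix.conjTranspose_add, Matrix.conjTranspose_neg,
      Matrix.conjTranspose_smul, hρ, Matrix.mul_add, Matrix.mul_neg,
      Matrix.mul_smul, Matrix.trace_add, Matrix.trace_neg, Matrix.trace_smul,
      htr2, smul_zero, add_zero]
    rw [Matrix.trace_mul_comm]
  have htr1' : (F₁ᴴ * ρ).trace = 0 := by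
    rw [Matrix.trace_mul_comm, show ρ * F₁ᴴ = (F₁ * ρ)ᴴ by
      rw [Matrix.conjTranspose_mul, hρ], Matrix.trace_conjTranspose, htr1, star_zero]
  have t2 : (A₂ * ρ * F₁ᴴ).trace = -(F₁ᴴ * L (F₂ * ρ)).trace := by
    rw [Matrix.trace_mul_comm, hA2]
    simp only [Matrix.mul_add, Matrix.mul_neg, Matrix.mul_smul, Matrix.trace_add,
      Matrix.trace_neg, Matrix.trace_smul, htr1', smul_zero, add_zero]
  have key := key_identity L H hH Lop hL ρ hρ hstat F₁ F₂
  rw [Matrix.trace_add, t1, t2]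
  linear_combination -key

theorem stmt8 {n p m : ℕ}
    (L : Matrix (Fin n) (Fin n) ℂ → Matrix (Fin n) (Fin n) ℂ)
    (H : Matrix (Fin n) (Fin n) ℂ) (hH : H.IsHermitian)
    (Lop : Fin p → Matrix (Fin n) (Fin n) ℂ)
    (hL : ∀ ρ, L ρ = (-Complex.I) • (H * ρ - ρ * H) + ∑ μ, dissipator (Lop μ) ρ)
    (ρbar : Matrix (Fin n) (Fin n) ℂ) (hpsd : ρbar.PosSemidef) (htr : ρbar.trace = 1)
    (hstat : L ρbar = 0)
    (A F : Fin m → Matrix (Fin n) (Fin n) ℂ)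
    (hFtr : ∀ k, (F k * ρbar).trace = 0)
    (hFeq : ∀ k, -(L (F k * ρbar)) = A k * ρbar - (A k * ρbar).trace • ρbar) :
    (Matrix.of fun k j : Fin m =>
        (F j * ρbar * (A k)ᴴ + A j * ρbar * (F k)ᴴ).trace).IsHermitian ∧
    (Matrix.of fun k j : Fin m =>
        (F j * ρbar * (A k)ᴴ + A j * ρbar * (F k)ᴴ).trace).PosSemidef ∧
    ∀ A₀ F₀ : Matrix (Fin n) (Fin n) ℂ, (F₀ * ρbar).trace = 0 →
      -(L (F₀ * ρbar)) = A₀ * ρbar - (A₀ * ρbar).trace • ρbar →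
      (F₀ * ρbar * A₀ᴴ + A₀ * ρbar * F₀ᴴ).trace.im = 0 ∧
        0 ≤ (F₀ * ρbar * A₀ᴴ + A₀ * ρbar * F₀ᴴ).trace.re := by
  have hρ : ρbarᴴ = ρbar := hpsd.1
  set K : Fin p → Matrix (Fin n) (Fin n) ℂ → Matrix (Fin n) (Fin n) ℂ :=
    fun μ B => Lop μ * B - B * Lop μ with hK
  have entry : ∀ k j : Fin m,
      (F j * ρbar * (A k)ᴴ + A j * ρbar * (F k)ᴴ).trace
        = ∑ μ, ((K μ (F k))ᴴ * (K μ (F j)) * ρbar).trace := fun k j =>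
    entry_eq L H hH Lop hL ρbar hρ hstat (A k) (F k) (A j) (F j)
      (hFtr k) (hFtr j) (hFeq k) (hFeq j)
  -- conjugate symmetry of the summands
  have hconj : ∀ (k j : Fin m),
      star (∑ μ, ((K μ (F k))ᴴ * (K μ (F j)) * ρbar).trace)
        = ∑ μ, ((K μ (F j))ᴴ * (K μ (F k)) * ρbar).trace := by
    intro k j
    rw [star_sum]
    refine Finset.sum_congr rfl fun μ _ => ?_
    rw [← Matrix.trace_conjTranspose]
    simp only [Matrix.conjTranspose_mul, Matrix.conjTranspose_conjTranspose, hρ]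
    rw [Matrix.trace_mul_comm, mul_assoc]
  have herm : (Matrix.of fun k j : Fin m =>
      (F j * ρbar * (A k)ᴴ + A j * ρbar * (F k)ᴴ).trace).IsHermitian := by
    rw [Matrix.IsHermitian]
    ext k j
    rw [Matrix.conjTranspose_apply, Matrix.of_apply, Matrix.of_apply, entry, entry,
      hconj j k]
  refine ⟨herm, Matrix.PosSemidef.of_dotProduct_mulVec_nonneg herm fun x => ?_, fun A₀ F₀ h0tr h0eq => ?_⟩
  · -- positivity of the quadratic form
    set N : Fin p → Matrix (Fin n) (Fin n) ℂ := fun μ => ∑ j, x j • K μ (F j) with hN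
    have expand : star x ⬝ᵥ (Matrix.of fun k j : Fin m =>
        (F j * ρbar * (A k)ᴴ + A j * ρbar * (F k)ᴴ).trace) *ᵥ x
        = ∑ μ, ((N μ)ᴴ * N μ * ρbar).trace := by
      have hNμ : ∀ μ, (N μ)ᴴ * N μ * ρbar
          = ∑ k, ∑ j, (star (x k) * x j) • ((K μ (F k))ᴴ * (K μ (F j)) * ρbar) := by
        intro μ
        rw [hN]
        simp only [Matrix.conjTranspose_sum, Matrix.conjTranspose_smul,
          Finset.sum_mul, Matrix.mul_sum, Matrix.smul_mul, Matrix.mul_smul,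
          smul_smul]
        refine Finset.sum_congr rfl fun k _ => Finset.sum_congr rfl fun j _ => ?_
        rw [mul_comm]
      calc star x ⬝ᵥ (Matrix.of fun k j : Fin m =>
              (F j * ρbar * (A k)ᴴ + A j * ρbar * (F k)ᴴ).trace) *ᵥ x
          = ∑ k, ∑ j, ∑ μ, (star (x k) * x j) *
              ((K μ (F k))ᴴ * (K μ (F j)) * ρbar).trace := by
            rw [dotProduct]
            refine Finset.sum_congr rfl fun k _ => ?_
            rw [Matrix.mulVec, dotProduct, Finset.mul_sum]
            refine Finset.sum_congr rfl fun j _ => ?_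
            rw [Matrix.of_apply, entry k j, Finset.sum_mul, Finset.mul_sum]
            refine Finset.sum_congr rfl fun μ _ => ?_
            simp only [Pi.star_apply]
            ring
        _ = ∑ μ, ∑ k, ∑ j, (star (x k) * x j) *
              ((K μ (F k))ᴴ * (K μ (F j)) * ρbar).trace := by
            rw [Finset.sum_congr rfl fun k (_ : k ∈ (Finset.univ : Finset (Fin m))) =>
              Finset.sum_comm, Finset.sum_comm]
        _ = ∑ μ, ((N μ)ᴴ * N μ * ρbar).trace := by
            refine Finset.sum_congr rfl fun μ _ => ?_
            rw [hNμ μ, Matrix.trace_sum]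
            refine Finset.sum_congr rfl fun k _ => ?_
            rw [Matrix.trace_sum]
            refine Finset.sum_congr rfl fun j _ => ?_
            rw [Matrix.trace_smul, smul_eq_mul]
    rw [expand]
    exact Finset.sum_nonneg fun μ _ => trace_sandwich_nonneg hpsd (N μ)
  · -- single-pair statement
    have e0 := entry_eq L H hH Lop hL ρbar hρ hstat A₀ F₀ A₀ F₀ h0tr h0tr h0eq h0eq
    have hnn : 0 ≤ (F₀ * ρbar * A₀ᴴ + A₀ * ρbar * F₀ᴴ).trace := by
      rw [e0]
      exact Finset.sum_nonneg fun μ _ => trace_sandwich_nonneg hpsd _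
    rw [Complex.le_def] at hnn
    exact ⟨hnn.2.symm.trans rfl, by simpa using hnn.1⟩
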